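/- arXiv:0708.2212 — 2 statements merged into one kernel-verified Lean document; each statement's English description precedes it below -/
import Mathlib

section
/- For every τ ∈ B_n, the length ℓ_B(τ) equals n - (1/2)·(the number of orbits A of τ such that A ≠ -A). -/
/-!  Common setup: annular non-crossing partitions of type B, following
Goulden–Nica–Oancea, "Enumerative properties of NC^(B)(p,q)". -/

/-- The underlying set `{±1, …, ±n}`, realized inside `ℤ`. -/
def signedSet (n : ℕ) : Set ℤ := {x : ℤ | x ≠ 0 ∧ |x| ≤ (n : ℤ)}

/-- Membership in the hyperoctahedral group `B_n`, realized as the permutations of `ℤ`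
that commute with negation and fix every point outside `{±1, …, ±n}`. -/
def inB (n : ℕ) (π : Equiv.Perm ℤ) : Prop :=
  (∀ x : ℤ, π (-x) = -(π x)) ∧ ∀ x : ℤ, x ∉ signedSet n → π x = x

/-- The set of generators of `B_n`:
`(i,j)(-i,-j)`, `(i,-j)(-i,j)` for `1 ≤ i ≠ j ≤ n`, and `(i,-i)` for `1 ≤ i ≤ n`. -/
def genB (n : ℕ) : Set (Equiv.Perm ℤ) :=
  {π | (∃ i j : ℤ, 1 ≤ i ∧ i ≤ (n : ℤ) ∧ 1 ≤ j ∧ j ≤ (n : ℤ) ∧ i ≠ j ∧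
          π = Equiv.swap i j * Equiv.swap (-i) (-j)) ∨
       (∃ i j : ℤ, 1 ≤ i ∧ i ≤ (n : ℤ) ∧ 1 ≤ j ∧ j ≤ (n : ℤ) ∧ i ≠ j ∧
          π = Equiv.swap i (-j) * Equiv.swap (-i) j) ∨
       (∃ i : ℤ, 1 ≤ i ∧ i ≤ (n : ℤ) ∧ π = Equiv.swap i (-i))}

/-- The length function `ℓ_B` on `B_n`: the least `k` such that `τ` is a product of `k`
generators from `genB n` (the empty product being the identity). -/
noncomputable def lenB (n : ℕ) (τ : Equiv.Perm ℤ) : ℕ :=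
  sInf {k : ℕ | ∃ l : List (Equiv.Perm ℤ),
    l.length = k ∧ (∀ g ∈ l, g ∈ genB n) ∧ l.prod = τ}

/-- The partial order on `B_n`:  `τ ≤ σ` iff `ℓ_B(σ) = ℓ_B(τ) + ℓ_B(τ⁻¹σ)`. -/
def leB (n : ℕ) (τ σ : Equiv.Perm ℤ) : Prop :=
  lenB n σ = lenB n τ + lenB n (τ⁻¹ * σ)

/-- The permutation `γ_{p,q} = (1,…,p,-1,…,-p)(p+1,…,p+q,-(p+1),…,-(p+q))`. -/
def gammaPQ (p q : ℕ) : Equiv.Perm ℤ :=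
  (((List.range p).map fun i => ((i : ℤ) + 1)) ++
      ((List.range p).map fun i => -((i : ℤ) + 1))).formPerm *
    (((List.range q).map fun i => ((p : ℤ) + (i : ℤ) + 1)) ++
      ((List.range q).map fun i => -((p : ℤ) + (i : ℤ) + 1))).formPerm

/-- The long cycle `γ_n = (1,…,n,-1,…,-n)` of `B_n` (disc case). -/
def gammaDisc (n : ℕ) : Equiv.Perm ℤ :=
  (((List.range n).map fun i => ((i : ℤ) + 1)) ++
    ((List.range n).map fun i => -((i : ℤ) + 1))).formPerm

/-- The annular non-crossing permutations of type B: `S^B_nc(p,q) = [ε, γ_{p,q}] ⊆ B_{p+q}`. -/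
def SncB (p q : ℕ) : Set (Equiv.Perm ℤ) :=
  {τ | inB (p + q) τ ∧ leB (p + q) τ (gammaPQ p q)}

/-- The orbit of `x` under the permutation `τ`. -/
def permOrbit (τ : Equiv.Perm ℤ) (x : ℤ) : Set ℤ := {y | ∃ m : ℤ, (τ ^ m) x = y}

/-- The partition `Ω(τ)` of `{±1,…,±n}` into orbits of `τ`. -/
def orbitsOn (n : ℕ) (τ : Equiv.Perm ℤ) : Set (Set ℤ) :=
  {A | ∃ x ∈ signedSet n, A = permOrbit τ x}

/-- The negation `-A` of a set `A ⊆ ℤ`. -/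
def negSet (A : Set ℤ) : Set ℤ := {x | -x ∈ A}

/-- The partition `Ω̃(τ)`, obtained from `Ω(τ)` by merging all inversion-invariant orbits
(orbits `A` with `A = -A`) into a single block. -/
def omegaTilde (n : ℕ) (τ : Equiv.Perm ℤ) : Set (Set ℤ) :=
  {A | A ∈ orbitsOn n τ ∧ negSet A ≠ A} ∪
    {B | B = ⋃₀ {A | A ∈ orbitsOn n τ ∧ negSet A = A} ∧ B.Nonempty}

/-- The annular non-crossing partitions of type B: `NC^B(p,q) = {Ω̃(τ) : τ ∈ S^B_nc(p,q)}`. -/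
def NCB (p q : ℕ) : Set (Set (Set ℤ)) :=
  {π | ∃ τ ∈ SncB p q, π = omegaTilde (p + q) τ}

/-- The type B non-crossing partitions of the disc: `NC^B(n) = {Ω̃(τ) : τ ∈ B_n, τ ≤ γ_n}`. -/
def NCBdisc (n : ℕ) : Set (Set (Set ℤ)) :=
  {π | ∃ τ, inB n τ ∧ leB n τ (gammaDisc n) ∧ π = omegaTilde n τ}

/-- Reverse refinement order on partitions: every block of `π` is contained in a block of `ρ`. -/
def refines (π ρ : Set (Set ℤ)) : Prop := ∀ A ∈ π, ∃ B ∈ ρ, A ⊆ B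

/-- The rank of a partition of `{±1,…,±n}`:
`n` minus half the number of blocks `A` with `A ≠ -A`. -/
noncomputable def rankNCB (n : ℕ) (π : Set (Set ℤ)) : ℕ :=
  n - {A | A ∈ π ∧ negSet A ≠ A}.ncard / 2

/-- The inner point set `{±(p+1), …, ±(p+q)}`. -/
def innerSet (p q : ℕ) : Set ℤ := {x : ℤ | (p : ℤ) < |x| ∧ |x| ≤ (p : ℤ) + (q : ℤ)}

/-- The connectivity of `π ∈ NC^B(p,q)`: half the number of blocks `A` with `A ≠ -A`
meeting both `{±1,…,±p}` and `{±(p+1),…,±(p+q)}`. -/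
noncomputable def connectivity (p q : ℕ) (π : Set (Set ℤ)) : ℕ :=
  {A | A ∈ π ∧ negSet A ≠ A ∧ (A ∩ signedSet p).Nonempty ∧
    (A ∩ innerSet p q).Nonempty}.ncard / 2

/-- The number of exterior pairs of blocks `{A, -A}` (with `A ≠ -A`, `A ⊆ {±1,…,±p}`). -/
noncomputable def extPairs (p : ℕ) (π : Set (Set ℤ)) : ℕ :=
  {A | A ∈ π ∧ negSet A ≠ A ∧ A ⊆ signedSet p}.ncard / 2

/-- The number of interior pairs of blocks `{A, -A}`
(with `A ≠ -A`, `A ⊆ {±(p+1),…,±(p+q)}`). -/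
noncomputable def intPairs (p q : ℕ) (π : Set (Set ℤ)) : ℕ :=
  {A | A ∈ π ∧ negSet A ≠ A ∧ A ⊆ innerSet p q}.ncard / 2

/-- The minimum `0̂` of `NC^B(p,q)` (with `n = p+q`): the partition into singletons. -/
def botNCB (n : ℕ) : Set (Set ℤ) := {A | ∃ x ∈ signedSet n, A = {x}}

/-- The maximum `1̂` of `NC^B(p,q)` (with `n = p+q`): the partition with a single block. -/
def topNCB (n : ℕ) : Set (Set ℤ) := {signedSet n}

/-- The orbit of `x` under the subgroup generated by `{τ, γ}`. -/
def jointOrbit (τ γ : Equiv.Perm ℤ) (x : ℤ) : Set ℤ :=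
  {y | ∃ g ∈ Subgroup.closure ({τ, γ} : Set (Equiv.Perm ℤ)), g x = y}

/-- The orbits on `{±1,…,±n}` of the subgroup generated by `{τ, γ}`. -/
def jointOrbitsOn (n : ℕ) (τ γ : Equiv.Perm ℤ) : Set (Set ℤ) :=
  {Y | ∃ x ∈ signedSet n, Y = jointOrbit τ γ x}


open Equiv Equiv.Perm

lemma mem_permOrbit {σ : Perm ℤ} {x y : ℤ} : y ∈ permOrbit σ x ↔ σ.SameCycle x y := Iff.rfl

lemma mem_permOrbit_self (σ : Perm ℤ) (x : ℤ) : x ∈ permOrbit σ x := ⟨0, rfl⟩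

lemma permOrbit_nonempty (σ : Perm ℤ) (x : ℤ) : (permOrbit σ x).Nonempty :=
  ⟨x, mem_permOrbit_self σ x⟩

lemma invariant_subset {σ : Perm ℤ} {S : Set ℤ} {x : ℤ}
    (hf : ∀ y ∈ S, σ y ∈ S) (hb : ∀ y ∈ S, σ⁻¹ y ∈ S) (hx : x ∈ S) :
    permOrbit σ x ⊆ S := by
  rintro y ⟨m, rfl⟩
  induction m using Int.induction_on with
  | zero => exact hx
  | succ i ih => rw [add_comm, zpow_add, zpow_one, Perm.mul_apply]; exact hf _ ih
  | pred i ih => rw [sub_eq_add_neg, add_comm, zpow_add, zpow_neg, zpow_one, Perm.mul_apply]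
                 exact hb _ ih

lemma permOrbit_eq_of_mem {σ : Perm ℤ} {x y : ℤ} (h : y ∈ permOrbit σ x) :
    permOrbit σ y = permOrbit σ x := by
  ext z
  exact ⟨fun hz => (mem_permOrbit.1 h).trans hz, fun hz => (mem_permOrbit.1 h).symm.trans hz⟩

lemma apply_mem_permOrbit {σ : Perm ℤ} {x y : ℤ} (h : y ∈ permOrbit σ x) :
    σ y ∈ permOrbit σ x := (mem_permOrbit.1 h).apply_right

lemma inv_apply_mem_permOrbit {σ : Perm ℤ} {x y : ℤ} (h : y ∈ permOrbit σ x) :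
    σ⁻¹ y ∈ permOrbit σ x := (mem_permOrbit.1 h).symm_apply_right

lemma permOrbit_eq_of_agree {σ σ' : Perm ℤ} {x : ℤ}
    (h1 : ∀ y ∈ permOrbit σ x, σ' y = σ y)
    (h2 : ∀ y ∈ permOrbit σ x, σ'⁻¹ y = σ⁻¹ y) :
    permOrbit σ' x = permOrbit σ x := by
  have hsub : permOrbit σ' x ⊆ permOrbit σ x := by
    refine invariant_subset (fun y hy => ?_) (fun y hy => ?_) (mem_permOrbit_self σ x)
    · rw [h1 y hy]; exact apply_mem_permOrbit hy
    · rw [h2 y hy]; exact inv_apply_mem_permOrbit hy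
  refine Set.Subset.antisymm hsub ?_
  have : permOrbit σ x ⊆ permOrbit σ' x ∩ permOrbit σ x := by
    refine invariant_subset (fun y hy => ?_) (fun y hy => ?_)
      ⟨mem_permOrbit_self σ' x, mem_permOrbit_self σ x⟩
    · exact ⟨h1 y hy.2 ▸ apply_mem_permOrbit hy.1, apply_mem_permOrbit hy.2⟩
    · exact ⟨h2 y hy.2 ▸ inv_apply_mem_permOrbit hy.1, inv_apply_mem_permOrbit hy.2⟩
  exact fun y hy => (this hy).1

lemma permOrbit_of_fixed {σ : Perm ℤ} {x : ℤ} (h : σ x = x) : permOrbit σ x = {x} := by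
  refine Set.Subset.antisymm ?_ (by simp [mem_permOrbit_self])
  refine invariant_subset (fun y hy => ?_) (fun y hy => ?_) rfl
  · simp_all
  · simp only [Set.mem_singleton_iff] at hy ⊢
    rw [hy]
    have := congrArg (fun z => σ⁻¹ z) h
    simpa using this.symm

/-! ### inB and negSet basics -/

lemma inB.one (n : ℕ) : inB n 1 := ⟨fun x => rfl, fun x _ => rfl⟩

lemma inB.mul {n : ℕ} {σ τ : Perm ℤ} (hσ : inB n σ) (hτ : inB n τ) : inB n (σ * τ) :=
  ⟨fun x => by simp [Perm.mul_apply, hτ.1, hσ.1],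
   fun x hx => by simp [Perm.mul_apply, hτ.2 x hx, hσ.2 x hx]⟩

lemma inB.inv_apply_neg {n : ℕ} {σ : Perm ℤ} (hσ : inB n σ) (x : ℤ) : σ⁻¹ (-x) = -(σ⁻¹ x) := by
  have := hσ.1 (σ⁻¹ x)
  simp only [Perm.coe_inv, Equiv.apply_symm_apply] at this
  have := congrArg (fun z => σ⁻¹ z) this
  simpa using this.symm

lemma inB.zpow_neg {n : ℕ} {σ : Perm ℤ} (hσ : inB n σ) (m : ℤ) (x : ℤ) :
    (σ ^ m) (-x) = -((σ ^ m) x) := by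
  induction m using Int.induction_on with
  | zero => simp
  | succ i ih => rw [add_comm, zpow_add, zpow_one, Perm.mul_apply, Perm.mul_apply, ih, hσ.1]
  | pred i ih =>
      rw [sub_eq_add_neg, add_comm, zpow_add, Perm.mul_apply, Perm.mul_apply, ih,
        zpow_neg_one, hσ.inv_apply_neg]

lemma mem_negSet {A : Set ℤ} {x : ℤ} : x ∈ negSet A ↔ -x ∈ A := Iff.rfl

lemma negSet_negSet (A : Set ℤ) : negSet (negSet A) = A := by
  ext x; simp [negSet]

lemma negSet_permOrbit {n : ℕ} {σ : Perm ℤ} (hσ : inB n σ) (x : ℤ) :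
    negSet (permOrbit σ x) = permOrbit σ (-x) := by
  ext y
  constructor
  · rintro ⟨m, hm⟩
    exact ⟨m, by rw [hσ.zpow_neg]; rw [hm]; ring⟩
  · rintro ⟨m, hm⟩
    refine ⟨m, ?_⟩
    rw [hσ.zpow_neg] at hm
    show (σ ^ m) x = -y
    omega

lemma negSet_singleton (x : ℤ) : negSet {x} = {-x} := by
  ext y; simp only [negSet, Set.mem_singleton_iff, Set.mem_setOf_eq]; omega

/-! ### signedSet and orbitsOn -/

lemma signedSet_finite (n : ℕ) : (signedSet n).Finite := by
  apply Set.Finite.subset (Set.finite_Icc (-(n:ℤ)) n)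
  intro x hx
  simp only [signedSet, Set.mem_setOf_eq] at hx
  have := abs_le.1 hx.2
  simp only [Set.mem_Icc]
  omega

lemma neg_mem_signedSet {n : ℕ} {x : ℤ} (h : x ∈ signedSet n) : -x ∈ signedSet n := by
  simp only [signedSet, Set.mem_setOf_eq] at *
  rw [abs_neg]
  exact ⟨neg_ne_zero.2 h.1, h.2⟩

lemma inB.apply_mem {n : ℕ} {σ : Perm ℤ} (hσ : inB n σ) {x : ℤ} (h : x ∈ signedSet n) :
    σ x ∈ signedSet n := by
  by_contra hc
  have h1 : σ (σ x) = σ x := hσ.2 _ hc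
  have : σ x = x := σ.injective h1
  exact hc (by rwa [this])

lemma inB.inv_apply_mem {n : ℕ} {σ : Perm ℤ} (hσ : inB n σ) {x : ℤ} (h : x ∈ signedSet n) :
    σ⁻¹ x ∈ signedSet n := by
  by_contra hc
  have h1 : σ (σ⁻¹ x) = σ⁻¹ x := hσ.2 _ hc
  simp only [Perm.coe_inv, Equiv.apply_symm_apply] at h1
  exact hc (h1 ▸ h)

lemma inB.mem_of_moved {n : ℕ} {σ : Perm ℤ} (hσ : inB n σ) {x : ℤ} (h : σ x ≠ x) :
    x ∈ signedSet n := by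
  by_contra hc; exact h (hσ.2 x hc)

lemma permOrbit_subset_signedSet {n : ℕ} {σ : Perm ℤ} (hσ : inB n σ) {x : ℤ}
    (h : x ∈ signedSet n) : permOrbit σ x ⊆ signedSet n :=
  invariant_subset (fun y hy => hσ.apply_mem hy) (fun y hy => hσ.inv_apply_mem hy) h

lemma mem_orbitsOn {n : ℕ} {σ : Perm ℤ} {A : Set ℤ} :
    A ∈ orbitsOn n σ ↔ ∃ x ∈ signedSet n, A = permOrbit σ x := Iff.rfl

lemma permOrbit_mem_orbitsOn {n : ℕ} (σ : Perm ℤ) {x : ℤ} (h : x ∈ signedSet n) :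
    permOrbit σ x ∈ orbitsOn n σ := ⟨x, h, rfl⟩

lemma orbitsOn_finite (n : ℕ) (σ : Perm ℤ) (hσ : inB n σ) : (orbitsOn n σ).Finite := by
  have : orbitsOn n σ ⊆ {A | A ⊆ signedSet n} := by
    rintro A ⟨x, hx, rfl⟩
    exact permOrbit_subset_signedSet hσ hx
  exact Set.Finite.subset (Set.Finite.finite_subsets (signedSet_finite n)) this

lemma orbitsOn_eq_of_mem {n : ℕ} {σ : Perm ℤ} {A : Set ℤ} (hA : A ∈ orbitsOn n σ)
    {a : ℤ} (ha : a ∈ A) : A = permOrbit σ a := by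
  obtain ⟨x, hx, rfl⟩ := hA
  exact (permOrbit_eq_of_mem ha).symm

lemma negSet_mem_orbitsOn {n : ℕ} {σ : Perm ℤ} (hσ : inB n σ) {A : Set ℤ}
    (hA : A ∈ orbitsOn n σ) : negSet A ∈ orbitsOn n σ := by
  obtain ⟨x, hx, rfl⟩ := hA
  rw [negSet_permOrbit hσ]
  exact permOrbit_mem_orbitsOn σ (neg_mem_signedSet hx)

/-! ### counting basics -/

def asymOrbits (n : ℕ) (σ : Perm ℤ) : Set (Set ℤ) :=
  {A | A ∈ orbitsOn n σ ∧ negSet A ≠ A}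

lemma asymOrbits_finite {n : ℕ} {σ : Perm ℤ} (hσ : inB n σ) : (asymOrbits n σ).Finite :=
  (orbitsOn_finite n σ hσ).subset (fun A hA => hA.1)

lemma orbitsOn_eq_of_common {n : ℕ} {σ : Perm ℤ} {A B : Set ℤ}
    (hA : A ∈ orbitsOn n σ) (hB : B ∈ orbitsOn n σ) {z : ℤ} (hzA : z ∈ A) (hzB : z ∈ B) :
    A = B := by
  rw [orbitsOn_eq_of_mem hA hzA, orbitsOn_eq_of_mem hB hzB]

lemma signedSet_ncard (n : ℕ) : (signedSet n).ncard = 2 * n := by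
  have : signedSet n = ↑((Finset.Icc (-(n:ℤ)) n).erase 0) := by
    ext x
    simp only [signedSet, Set.mem_setOf_eq, Finset.coe_erase, Set.mem_diff,
      Finset.mem_coe, Finset.mem_Icc, Set.mem_singleton_iff]
    constructor
    · rintro ⟨h1, h2⟩; have := abs_le.1 h2; exact ⟨⟨this.1, this.2⟩, h1⟩
    · rintro ⟨⟨h1, h2⟩, h3⟩; exact ⟨h3, abs_le.2 ⟨h1, h2⟩⟩
  rw [this, Set.ncard_coe_finset, Finset.card_erase_of_mem (by simp), Int.card_Icc]
  omega

lemma asymOrbits_one (n : ℕ) : asymOrbits n 1 = (fun x => ({x} : Set ℤ)) '' signedSet n := by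
  ext A
  constructor
  · rintro ⟨⟨x, hx, rfl⟩, _⟩
    exact ⟨x, hx, by rw [permOrbit_of_fixed (Perm.one_apply x)]⟩
  · rintro ⟨x, hx, rfl⟩
    refine ⟨⟨x, hx, (permOrbit_of_fixed (Perm.one_apply x)).symm⟩, ?_⟩
    rw [negSet_singleton]
    intro h
    have : -x = x := by
      have := h ▸ (Set.mem_singleton (-x))
      simpa using this
    exact hx.1 (by omega)

lemma asymOrbits_one_ncard (n : ℕ) : (asymOrbits n 1).ncard = 2 * n := by
  rw [asymOrbits_one, Set.ncard_image_of_injOn (fun a _ b _ h => by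
    simpa using (Set.singleton_eq_singleton_iff.1 h)), signedSet_ncard]

lemma book {F F' D E : Set (Set ℤ)} (hF : F.Finite) (hF' : F'.Finite)
    (h1 : F \ D ⊆ F') (h2 : E ⊆ F') (h3 : ∀ X ∈ E, X ∉ F \ D) {k m : ℕ}
    (hk : (F ∩ D).ncard ≤ k) (hm : m ≤ E.ncard) : F.ncard + m ≤ F'.ncard + k := by
  have e1 : F.ncard ≤ (F \ D).ncard + (F ∩ D).ncard := by
    conv_lhs => rw [← Set.diff_union_inter F D]
    exact Set.ncard_union_le _ _
  have disj : Disjoint (F \ D) E := by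
    rw [Set.disjoint_right]
    exact h3
  have e2 : ((F \ D) ∪ E).ncard = (F \ D).ncard + E.ncard :=
    Set.ncard_union_eq disj (hF.subset Set.diff_subset) (hF'.subset h2)
  have e3 : ((F \ D) ∪ E).ncard ≤ F'.ncard :=
    Set.ncard_le_ncard (Set.union_subset h1 h2) hF'
  omega

/-! ### generators -/

/-- normal form of a double generator -/
def dswap (a b : ℤ) : Perm ℤ := Equiv.swap a b * Equiv.swap (-a) (-b)

lemma mem_signedSet' {n : ℕ} {x : ℤ} : x ∈ signedSet n ↔ x ≠ 0 ∧ x.natAbs ≤ n := by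
  simp only [signedSet, Set.mem_setOf_eq, Int.abs_eq_natAbs]
  omega

lemma genB_cases {n : ℕ} {g : Perm ℤ} (hg : g ∈ genB n) :
    (∃ a b : ℤ, a ∈ signedSet n ∧ b ∈ signedSet n ∧ b ≠ a ∧ b ≠ -a ∧ g = dswap a b) ∨
    (∃ a : ℤ, a ∈ signedSet n ∧ g = Equiv.swap a (-a)) := by
  rcases hg with ⟨i, j, hi1, hi2, hj1, hj2, hij, rfl⟩ | ⟨i, j, hi1, hi2, hj1, hj2, hij, rfl⟩ |
    ⟨i, hi1, hi2, rfl⟩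
  · exact Or.inl ⟨i, j, mem_signedSet'.2 ⟨by omega, by omega⟩,
      mem_signedSet'.2 ⟨by omega, by omega⟩, by omega, by omega, rfl⟩
  · refine Or.inl ⟨i, -j, mem_signedSet'.2 ⟨by omega, by omega⟩,
      mem_signedSet'.2 ⟨by omega, by omega⟩, by omega, by omega, ?_⟩
    simp [dswap]
  · exact Or.inr ⟨i, mem_signedSet'.2 ⟨by omega, by omega⟩, rfl⟩

lemma dswap_apply {a b : ℤ} (h0a : a ≠ 0) (h0b : b ≠ 0) (h1 : b ≠ a) (h2 : b ≠ -a) (x : ℤ) :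
    dswap a b x = if x = a then b else if x = b then a
      else if x = -a then -b else if x = -b then -a else x := by
  simp only [dswap, Perm.mul_apply, Equiv.swap_apply_def]
  split_ifs <;> omega

lemma sswap_apply (a x : ℤ) :
    Equiv.swap a (-a) x = if x = a then -a else if x = -a then a else x := by
  simp only [Equiv.swap_apply_def]

lemma dswap_inB {n : ℕ} {a b : ℤ} (ha : a ∈ signedSet n) (hb : b ∈ signedSet n)
    (h1 : b ≠ a) (h2 : b ≠ -a) : inB n (dswap a b) := by
  have h0a := ha.1; have h0b := hb.1
  rw [mem_signedSet'] at ha hb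
  constructor
  · intro x
    simp only [dswap_apply h0a h0b h1 h2]
    split_ifs <;> omega
  · intro x hx
    rw [mem_signedSet'] at hx
    simp only [dswap_apply h0a h0b h1 h2]
    split_ifs <;> omega

lemma sswap_inB {n : ℕ} {a : ℤ} (ha : a ∈ signedSet n) : inB n (Equiv.swap a (-a)) := by
  rw [mem_signedSet'] at ha
  constructor
  · intro x
    simp only [sswap_apply]
    split_ifs <;> omega
  · intro x hx
    rw [mem_signedSet'] at hx
    simp only [sswap_apply]
    split_ifs <;> omega

lemma genB_inB {n : ℕ} {g : Perm ℤ} (hg : g ∈ genB n) : inB n g := by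
  rcases genB_cases hg with ⟨a, b, ha, hb, h1, h2, rfl⟩ | ⟨a, ha, rfl⟩
  · exact dswap_inB ha hb h1 h2
  · exact sswap_inB ha

lemma inB_list_prod {n : ℕ} {l : List (Perm ℤ)} (h : ∀ g ∈ l, g ∈ genB n) :
    inB n l.prod := by
  induction l with
  | nil => exact inB.one n
  | cons g l ih =>
      rw [List.prod_cons]
      exact (genB_inB (h g (by simp))).mul (ih fun x hx => h x (by simp [hx]))

lemma dswap_mul_self {a b : ℤ} (h0a : a ≠ 0) (h0b : b ≠ 0) (h1 : b ≠ a) (h2 : b ≠ -a) :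
    dswap a b * dswap a b = 1 := by
  ext x
  simp only [Perm.mul_apply, dswap_apply h0a h0b h1 h2, Perm.one_apply]
  split_ifs <;> omega

lemma sswap_mul_self (a : ℤ) : Equiv.swap a (-a) * Equiv.swap a (-a) = 1 := by
  rw [Equiv.swap_mul_self]

/-! ### untouched orbits -/

lemma perm_inv_fixed {g : Perm ℤ} {y : ℤ} (h : g y = y) : g⁻¹ y = y := by
  have := congrArg (fun z => g⁻¹ z) h
  simpa using this.symm

lemma permOrbit_mul_eq_of_fixes {σ g : Perm ℤ} {x : ℤ}
    (hg : ∀ y ∈ permOrbit σ x, g y = y) :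
    permOrbit (g * σ) x = permOrbit σ x := by
  apply permOrbit_eq_of_agree
  · intro y hy
    rw [Perm.mul_apply, hg _ (apply_mem_permOrbit hy)]
  · intro y hy
    rw [mul_inv_rev, Perm.mul_apply, perm_inv_fixed (hg _ hy)]

/-! ### lower bound step -/

lemma diff_subset_asym {n : ℕ} {σ σ' : Perm ℤ} {D : Set (Set ℤ)}
    (h : ∀ X ∈ orbitsOn n σ, X ∉ D → X ∈ orbitsOn n σ') :
    asymOrbits n σ \ D ⊆ asymOrbits n σ' := by
  rintro X ⟨⟨hX1, hX2⟩, hXD⟩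
  exact ⟨h X hX1 hXD, hX2⟩

lemma ncard_le_two {A B : Set ℤ} {S : Set (Set ℤ)} (h : S ⊆ {A, B}) : S.ncard ≤ 2 := by
  calc S.ncard ≤ ({A, B} : Set (Set ℤ)).ncard :=
        Set.ncard_le_ncard h ((Set.finite_singleton B).insert A)
    _ ≤ 2 := by
        calc ({A, B} : Set (Set ℤ)).ncard ≤ ({B} : Set (Set ℤ)).ncard + 1 :=
              Set.ncard_insert_le A {B}
          _ ≤ 2 := by simp

lemma step_double {n : ℕ} {σ : Perm ℤ} (hσ : inB n σ) {a b : ℤ}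
    (ha : a ∈ signedSet n) (hb : b ∈ signedSet n) (h1 : b ≠ a) (h2 : b ≠ -a) :
    (asymOrbits n σ).ncard ≤ (asymOrbits n (dswap a b * σ)).ncard + 2 := by
  have h0a := ha.1
  have h0b := hb.1
  set g := dswap a b with hgdef
  have hgapp : ∀ x, g x = if x = a then b else if x = b then a
      else if x = -a then -b else if x = -b then -a else x := dswap_apply h0a h0b h1 h2
  set σ' := g * σ with hσ'def
  have hσ' : inB n σ' := (dswap_inB ha hb h1 h2).mul hσ
  set A := permOrbit σ a with hA
  set B := permOrbit σ b with hB
  have hAmem : A ∈ orbitsOn n σ := permOrbit_mem_orbitsOn σ ha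
  have hBmem : B ∈ orbitsOn n σ := permOrbit_mem_orbitsOn σ hb
  have hnA : negSet A = permOrbit σ (-a) := negSet_permOrbit hσ a
  have hnB : negSet B = permOrbit σ (-b) := negSet_permOrbit hσ b
  have hnAmem : negSet A ∈ orbitsOn n σ := negSet_mem_orbitsOn hσ hAmem
  have hnBmem : negSet B ∈ orbitsOn n σ := negSet_mem_orbitsOn hσ hBmem
  set D : Set (Set ℤ) := {A, B, negSet A, negSet B} with hD
  -- untouched orbits survive
  have huntouched : ∀ X ∈ orbitsOn n σ, X ∉ D → X ∈ orbitsOn n σ' := by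
    rintro X hXmem hXD
    obtain ⟨x, hx, rfl⟩ := hXmem
    have hnot : ∀ y ∈ permOrbit σ x, y ≠ a ∧ y ≠ b ∧ y ≠ -a ∧ y ≠ -b := by
      intro y hy
      refine ⟨?_, ?_, ?_, ?_⟩ <;> rintro rfl
      · exact hXD (by rw [hD]; left; rw [hA, permOrbit_eq_of_mem hy])
      · exact hXD (by rw [hD]; right; left; rw [hB, permOrbit_eq_of_mem hy])
      · exact hXD (by rw [hD]; right; right; left; rw [hnA, permOrbit_eq_of_mem hy])
      · refine hXD ?_
        rw [hD]
        right; right; right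
        rw [Set.mem_singleton_iff, hnB, permOrbit_eq_of_mem hy]
    rw [hσ'def, ← permOrbit_mul_eq_of_fixes (σ := σ) (g := g) (x := x) ?_]
    · exact permOrbit_mem_orbitsOn _ hx
    · intro y hy
      obtain ⟨e1, e2, e3, e4⟩ := hnot y hy
      rw [hgapp]
      simp [e1, e2, e3, e4]
  have hdiff : asymOrbits n σ \ D ⊆ asymOrbits n σ' := diff_subset_asym huntouched
  have hFfin : (asymOrbits n σ).Finite := asymOrbits_finite hσ
  have hF'fin : (asymOrbits n σ').Finite := asymOrbits_finite hσ'
  by_cases hsym : negSet A = A ∨ negSet B = B ∨ B = A ∨ B = negSet A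
  · -- easy cases : at most two asymmetric touched orbits
    have hk : (asymOrbits n σ ∩ D).ncard ≤ 2 := by
      rcases hsym with h | h | h | h
      · refine ncard_le_two (A := B) (B := negSet B) ?_
        rintro X ⟨hXasym, (rfl | rfl | rfl | rfl)⟩
        · exact absurd h hXasym.2
        · left; rfl
        · exact absurd (by rw [negSet_negSet]; exact h.symm) hXasym.2
        · right; rfl
      · refine ncard_le_two (A := A) (B := negSet A) ?_
        rintro X ⟨hXasym, (rfl | rfl | rfl | rfl)⟩
        · left; rfl
        · exact absurd h hXasym.2
        · right; rfl
        · exact absurd (by rw [negSet_negSet, h]) hXasym.2.symm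
      · refine ncard_le_two (A := A) (B := negSet A) ?_
        rintro X ⟨hXasym, (rfl | rfl | rfl | rfl)⟩
        · left; rfl
        · left; exact h
        · right; rfl
        · right; rw [Set.mem_singleton_iff, h]
      · refine ncard_le_two (A := A) (B := negSet A) ?_
        rintro X ⟨hXasym, (rfl | rfl | rfl | rfl)⟩
        · left; rfl
        · right; exact h
        · right; rfl
        · left; rw [h, negSet_negSet]
    have := book hFfin hF'fin hdiff (Set.empty_subset _) (by simp) hk
      (Nat.zero_le (∅ : Set (Set ℤ)).ncard)
    omega
  · push_neg at hsym
    obtain ⟨hAA, hBB, hBA, hBnA⟩ := hsym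
    -- pairwise disjointness facts
    have hdisj : ∀ X Y : Set ℤ, X ∈ orbitsOn n σ → Y ∈ orbitsOn n σ → X ≠ Y →
        ∀ z, z ∈ X → z ∉ Y := by
      intro X Y hX hY hXY z hzX hzY
      exact hXY (orbitsOn_eq_of_common hX hY hzX hzY)
    have hnaA : -a ∉ A := fun h => hAA (orbitsOn_eq_of_common hnAmem hAmem (by
      rw [hnA]; exact mem_permOrbit_self σ (-a)) h)
    have hnaB : -a ∉ B := fun h => hBnA ((orbitsOn_eq_of_common hBmem hnAmem h (by
      rw [hnA]; exact mem_permOrbit_self σ (-a))))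
    have hnbA : -b ∉ A := by
      intro h
      have : negSet B = A := orbitsOn_eq_of_common hnBmem hAmem (by
        rw [hnB]; exact mem_permOrbit_self σ (-b)) h
      exact hBnA (by rw [← this, negSet_negSet])
    have hnbB : -b ∉ B := fun h => hBB (orbitsOn_eq_of_common hnBmem hBmem (by
      rw [hnB]; exact mem_permOrbit_self σ (-b)) h)
    have haA : a ∈ A := mem_permOrbit_self σ a
    have hbB : b ∈ B := mem_permOrbit_self σ b
    -- the merged orbit
    have hCsub : permOrbit σ' a ⊆ A ∪ B := by
      apply invariant_subset _ _ (Or.inl haA)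
      · intro y hy
        rw [hσ'def, Perm.mul_apply]
        have hσy : σ y ∈ A ∪ B := by
          rcases hy with hy | hy
          · exact Or.inl (apply_mem_permOrbit hy)
          · exact Or.inr (apply_mem_permOrbit hy)
        have e3 : σ y ≠ -a := fun h => by
          rcases hσy with h' | h' <;> rw [h] at h'
          exacts [hnaA h', hnaB h']
        have e4 : σ y ≠ -b := fun h => by
          rcases hσy with h' | h' <;> rw [h] at h'
          exacts [hnbA h', hnbB h']
        rw [hgapp]
        split_ifs with e1 e2
        · exact Or.inr hbB
        · exact Or.inl haA
        · exact hσy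
      · intro y hy
        have hginv : g⁻¹ = g :=
          inv_eq_of_mul_eq_one_right (dswap_mul_self h0a h0b h1 h2)
        rw [hσ'def, mul_inv_rev, Perm.mul_apply, hginv]
        have hgy : g y ∈ A ∪ B := by
          rw [hgapp]
          split_ifs with e1 e2 e3 e4
          · exact Or.inr hbB
          · exact Or.inl haA
          · exact absurd (e3 ▸ hy) (by rintro (h | h); exacts [hnaA h, hnaB h])
          · exact absurd (e4 ▸ hy) (by rintro (h | h); exacts [hnbA h, hnbB h])
          · exact hy
        rcases hgy with h | h
        · exact Or.inl (inv_apply_mem_permOrbit h)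
        · exact Or.inr (inv_apply_mem_permOrbit h)
    -- assemble the hard case
    set C := permOrbit σ' a with hC
    set C' := permOrbit σ' (-a) with hC'
    have hCneg : negSet C = C' := negSet_permOrbit hσ' a
    have haC : a ∈ C := mem_permOrbit_self σ' a
    have hnaC' : -a ∈ C' := mem_permOrbit_self σ' (-a)
    have hABdisj : ∀ z, z ∈ A ∪ B → z ∉ negSet A ∪ negSet B := by
      rintro z (hz | hz) (hz' | hz')
      · exact hAA.symm (orbitsOn_eq_of_common hAmem hnAmem hz hz')
      · exact hBnA.symm (by
          have := orbitsOn_eq_of_common hAmem hnBmem hz hz'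
          rw [← negSet_negSet B, ← this])
      · exact hBnA (orbitsOn_eq_of_common hBmem hnAmem hz hz')
      · exact hBB.symm (orbitsOn_eq_of_common hBmem hnBmem hz hz')
    have hC'sub : C' ⊆ negSet A ∪ negSet B := by
      intro z hz
      rw [← hCneg] at hz
      have : -z ∈ A ∪ B := hCsub hz
      rcases this with h | h
      · exact Or.inl h
      · exact Or.inr h
    have hCC' : C ≠ C' := by
      intro h
      have : -a ∈ A ∪ B := hCsub (h ▸ hnaC')
      exact hABdisj (-a) this (Or.inl (by rw [mem_negSet, neg_neg]; exact haA))
    have hCasym : negSet C ≠ C := fun h => hCC' (by rw [← hCneg, h])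
    have hC'asym : negSet C' ≠ C' := by
      rw [← hCneg, negSet_negSet]
      exact fun h => hCC' (h.trans hCneg)
    have hE : ({C, C'} : Set (Set ℤ)) ⊆ asymOrbits n σ' := by
      rintro X (rfl | rfl)
      · exact ⟨permOrbit_mem_orbitsOn σ' ha, hCasym⟩
      · exact ⟨permOrbit_mem_orbitsOn σ' (neg_mem_signedSet ha), hC'asym⟩
    have h3 : ∀ X ∈ ({C, C'} : Set (Set ℤ)), X ∉ asymOrbits n σ \ D := by
      rintro X (rfl | rfl) ⟨hXF, hXD⟩
      · exact hXD (by rw [hD]; left; exact orbitsOn_eq_of_mem hXF.1 haC)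
      · refine hXD ?_
        rw [hD]; right; right; left
        rw [orbitsOn_eq_of_mem hXF.1 hnaC', hnA]
    have hm : 2 ≤ ({C, C'} : Set (Set ℤ)).ncard := (Set.ncard_pair hCC').ge
    have hk : (asymOrbits n σ ∩ D).ncard ≤ 4 := by
      have hDfin : D.Finite :=
        (((Set.finite_singleton (negSet B)).insert (negSet A)).insert B).insert A
      calc (asymOrbits n σ ∩ D).ncard ≤ D.ncard :=
            Set.ncard_le_ncard Set.inter_subset_right hDfin
        _ ≤ ({B, negSet A, negSet B} : Set (Set ℤ)).ncard + 1 := Set.ncard_insert_le _ _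
        _ ≤ (({negSet A, negSet B} : Set (Set ℤ)).ncard + 1) + 1 := by
            have := Set.ncard_insert_le B ({negSet A, negSet B} : Set (Set ℤ))
            omega
        _ ≤ 4 := by
            have := Set.ncard_insert_le (negSet A) ({negSet B} : Set (Set ℤ))
            simp only [Set.ncard_singleton] at this
            omega
    have := book hFfin hF'fin hdiff hE h3 hk hm
    omega

lemma step_single {n : ℕ} {σ : Perm ℤ} (hσ : inB n σ) {a : ℤ} (ha : a ∈ signedSet n) :
    (asymOrbits n σ).ncard ≤ (asymOrbits n (Equiv.swap a (-a) * σ)).ncard + 2 := by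
  set g := Equiv.swap a (-a) with hgdef
  set σ' := g * σ with hσ'def
  have hσ' : inB n σ' := (sswap_inB ha).mul hσ
  set A := permOrbit σ a with hA
  have hnA : negSet A = permOrbit σ (-a) := negSet_permOrbit hσ a
  set D : Set (Set ℤ) := {A, negSet A} with hD
  have huntouched : ∀ X ∈ orbitsOn n σ, X ∉ D → X ∈ orbitsOn n σ' := by
    rintro X hXmem hXD
    obtain ⟨x, hx, rfl⟩ := hXmem
    rw [hσ'def, ← permOrbit_mul_eq_of_fixes (σ := σ) (g := g) (x := x) ?_]
    · exact permOrbit_mem_orbitsOn _ hx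
    · intro y hy
      have e1 : y ≠ a := by
        rintro rfl
        exact hXD (by rw [hD]; left; rw [hA, permOrbit_eq_of_mem hy])
      have e2 : y ≠ -a := by
        rintro rfl
        refine hXD ?_
        rw [hD]; right
        rw [Set.mem_singleton_iff, hnA, permOrbit_eq_of_mem hy]
      rw [hgdef]
      exact Equiv.swap_apply_of_ne_of_ne e1 e2
  have hk : (asymOrbits n σ ∩ D).ncard ≤ 2 :=
    ncard_le_two (A := A) (B := negSet A) Set.inter_subset_right
  have := book (asymOrbits_finite hσ) (asymOrbits_finite hσ')
    (diff_subset_asym huntouched) (Set.empty_subset _) (by simp) hk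
    (Nat.zero_le (∅ : Set (Set ℤ)).ncard)
  omega

lemma step_gen {n : ℕ} {σ g : Perm ℤ} (hσ : inB n σ) (hg : g ∈ genB n) :
    (asymOrbits n σ).ncard ≤ (asymOrbits n (g * σ)).ncard + 2 := by
  rcases genB_cases hg with ⟨a, b, ha, hb, h1, h2, rfl⟩ | ⟨a, ha, rfl⟩
  · exact step_double hσ ha hb h1 h2
  · exact step_single hσ ha

/-! ### upper bound step -/

lemma dswap_order_comm {a b : ℤ} (h0a : a ≠ 0) (h0b : b ≠ 0) (h1 : b ≠ a) (h2 : b ≠ -a) :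
    Equiv.swap (-a) (-b) * Equiv.swap a b = dswap a b := by
  ext x
  simp only [dswap, Perm.mul_apply, Equiv.swap_apply_def]
  split_ifs <;> omega

lemma dswap_genB {n : ℕ} {a b : ℤ} (ha : a ∈ signedSet n) (hb : b ∈ signedSet n)
    (h1 : b ≠ a) (h2 : b ≠ -a) : dswap a b ∈ genB n := by
  have h0a := ha.1; have h0b := hb.1
  rw [mem_signedSet'] at ha hb
  rcases lt_or_gt_of_ne h0a with hA | hA <;> rcases lt_or_gt_of_ne h0b with hB | hB
  · -- a < 0, b < 0
    left
    exact ⟨-a, -b, by omega, by omega, by omega, by omega, by omega, by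
      ext x; simp only [dswap, Perm.mul_apply, Equiv.swap_apply_def]; split_ifs <;> omega⟩
  · -- a < 0, b > 0
    right; left
    exact ⟨b, -a, by omega, by omega, by omega, by omega, by omega, by
      ext x; simp only [dswap, Perm.mul_apply, Equiv.swap_apply_def]; split_ifs <;> omega⟩
  · -- a > 0, b < 0
    right; left
    exact ⟨a, -b, by omega, by omega, by omega, by omega, by omega, by
      ext x; simp only [dswap, Perm.mul_apply, Equiv.swap_apply_def]; split_ifs <;> omega⟩
  · -- a > 0, b > 0
    left
    exact ⟨a, b, by omega, by omega, by omega, by omega, by omega, rfl⟩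


lemma sswap_genB {n : ℕ} {a : ℤ} (ha : a ∈ signedSet n) : Equiv.swap a (-a) ∈ genB n := by
  have h0a := ha.1
  rw [mem_signedSet'] at ha
  rcases lt_or_gt_of_ne h0a with hA | hA
  · right; right
    exact ⟨-a, by omega, by omega, by rw [neg_neg, Equiv.swap_comm]⟩
  · right; right
    exact ⟨a, by omega, by omega, rfl⟩

lemma singleton_asym {n : ℕ} {σ' : Perm ℤ} {a : ℤ} (ha : a ∈ signedSet n)
    (hfix : σ' a = a) : ({a} : Set ℤ) ∈ asymOrbits n σ' := by
  refine ⟨⟨a, ha, (permOrbit_of_fixed hfix).symm⟩, ?_⟩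
  rw [negSet_singleton]
  intro h
  have : -a ∈ ({a} : Set ℤ) := h ▸ rfl
  have h2 : -a = a := this
  have := ha.1
  omega

lemma contract {n : ℕ} {τ : Perm ℤ} (hτ : inB n τ) {a : ℤ} (hmove : τ a ≠ a) :
    ∃ g ∈ genB n,
      g * (g * τ) = τ ∧ (g * τ) a = a ∧ (g * τ) (-a) = -a ∧
      (∀ x, (g * τ) x ≠ x → τ x ≠ x) ∧
      (asymOrbits n τ).ncard + 2 ≤ (asymOrbits n (g * τ)).ncard := by
  have ha : a ∈ signedSet n := hτ.mem_of_moved hmove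
  have h0a := ha.1
  set b := τ a with hbdef
  have hb : b ∈ signedSet n := hτ.apply_mem ha
  have h0b := hb.1
  have hba : b ≠ a := hmove
  have hτna : τ (-a) = -b := hτ.1 a
  set A := permOrbit τ a with hA
  have hAmem : A ∈ orbitsOn n τ := permOrbit_mem_orbitsOn τ ha
  have hnA : negSet A = permOrbit τ (-a) := negSet_permOrbit hτ a
  have hnAmem : negSet A ∈ orbitsOn n τ := negSet_mem_orbitsOn hτ hAmem
  have haA : a ∈ A := mem_permOrbit_self τ a
  have hbA : b ∈ A := apply_mem_permOrbit haA
  have hnaNA : -a ∈ negSet A := by rw [mem_negSet, neg_neg]; exact haA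
  have hnbNA : -b ∈ negSet A := by rw [mem_negSet, neg_neg]; exact hbA
  by_cases hbna : b = -a
  · -- τ a = -a : use the single swap
    refine ⟨Equiv.swap a (-a), sswap_genB ha, ?_, ?_, ?_, ?_, ?_⟩
    · rw [← mul_assoc, sswap_mul_self, one_mul]
    · rw [Perm.mul_apply, ← hbdef, hbna, Equiv.swap_apply_right]
    · rw [Perm.mul_apply, hτna, hbna, neg_neg, Equiv.swap_apply_left]
    · intro x hx
      by_contra hc
      rw [Perm.mul_apply, hc] at hx
      have e1 : x ≠ a := fun h => hmove (show τ a = a by rw [← h]; exact hc)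
      have e2 : x ≠ -a := by
        rintro rfl
        rw [hτna, hbna, neg_neg] at hc
        omega
      exact hx (Equiv.swap_apply_of_ne_of_ne e1 e2)
    · -- counting for the single swap case
      set g := Equiv.swap a (-a) with hgdef
      set σ' := g * τ with hσ'def
      have hσ' : inB n σ' := (sswap_inB ha).mul hτ
      have hnAA : negSet A = A :=
        orbitsOn_eq_of_common hnAmem hAmem hnaNA (hbna ▸ hbA)
      have hfa : σ' a = a := by
        rw [hσ'def, Perm.mul_apply, ← hbdef, hbna, hgdef, Equiv.swap_apply_right]
      have hfna : σ' (-a) = -a := by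
        rw [hσ'def, Perm.mul_apply, hτna, hbna, neg_neg, hgdef, Equiv.swap_apply_left]
      set D : Set (Set ℤ) := {A} with hD
      have huntouched : ∀ X ∈ orbitsOn n τ, X ∉ D → X ∈ orbitsOn n σ' := by
        rintro X hXmem hXD
        obtain ⟨x, hx, rfl⟩ := hXmem
        rw [hσ'def, ← permOrbit_mul_eq_of_fixes (σ := τ) (g := g) (x := x) ?_]
        · exact permOrbit_mem_orbitsOn _ hx
        · intro y hy
          have e1 : y ≠ a := by
            rintro rfl
            exact hXD (by rw [hD, Set.mem_singleton_iff, hA, permOrbit_eq_of_mem hy])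
          have e2 : y ≠ -a := by
            rintro rfl
            refine hXD ?_
            rw [hD, Set.mem_singleton_iff, ← hnAA, hnA, permOrbit_eq_of_mem hy]
          rw [hgdef]
          exact Equiv.swap_apply_of_ne_of_ne e1 e2
      have hk : (asymOrbits n τ ∩ D).ncard ≤ 0 := by
        have : asymOrbits n τ ∩ D = ∅ := by
          ext X
          simp only [Set.mem_inter_iff, Set.mem_empty_iff_false, iff_false, not_and]
          rintro hXF hXD
          rw [hD, Set.mem_singleton_iff] at hXD
          exact hXF.2 (hXD ▸ hnAA)
        rw [this]
        simp
      have hE : ({({a} : Set ℤ), ({-a} : Set ℤ)} : Set (Set ℤ)) ⊆ asymOrbits n σ' := by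
        rintro X (rfl | rfl)
        · exact singleton_asym ha hfa
        · exact singleton_asym (neg_mem_signedSet ha) hfna
      have h3 : ∀ X ∈ ({({a} : Set ℤ), ({-a} : Set ℤ)} : Set (Set ℤ)),
          X ∉ asymOrbits n τ \ D := by
        rintro X (rfl | rfl) ⟨hXF, hXD⟩
        · exact hXD (by rw [hD, Set.mem_singleton_iff, orbitsOn_eq_of_mem hXF.1 rfl])
        · refine hXD ?_
          rw [hD, Set.mem_singleton_iff, orbitsOn_eq_of_mem hXF.1 rfl, ← hnA, hnAA]
      have hm : 2 ≤ ({({a} : Set ℤ), ({-a} : Set ℤ)} : Set (Set ℤ)).ncard := by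
        rw [Set.ncard_pair (by
          intro h
          have : a ∈ ({-a} : Set ℤ) := h ▸ rfl
          have h2 : a = -a := this
          omega)]
      have := book (asymOrbits_finite hτ) (asymOrbits_finite hσ')
        (diff_subset_asym huntouched) hE h3 hk hm
      omega
  · -- generic case : use the double swap
    have hgmem : dswap a b ∈ genB n := dswap_genB ha hb hba hbna
    have hgapp := dswap_apply h0a h0b hba hbna
    refine ⟨dswap a b, hgmem, ?_, ?_, ?_, ?_, ?_⟩
    · rw [← mul_assoc, dswap_mul_self h0a h0b hba hbna, one_mul]
    · rw [Perm.mul_apply, ← hbdef, hgapp, if_neg hba, if_pos rfl]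
    · rw [Perm.mul_apply, hτna, hgapp]
      rw [if_neg (by omega), if_neg (by omega), if_neg (by omega), if_pos rfl]
    · intro x hx
      by_contra hc
      rw [Perm.mul_apply, hc, hgapp] at hx
      split_ifs at hx with e1 e2 e3 e4
      · exact hba (by rw [hbdef, ← e1]; exact hc)
      · have h5 : τ b = b := by rw [← e2]; exact hc
        exact hba (τ.injective (hbdef ▸ h5))
      · have h5 : τ (-a) = -a := by rw [← e3]; exact hc
        rw [hτna] at h5
        omega
      · have h5 : τ (-b) = -b := by rw [← e4]; exact hc
        have h6 : -a = -b := τ.injective (by rw [hτna, h5])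
        omega
      · exact hx rfl
    · -- counting for the double swap case
      set g := dswap a b with hgdef
      set σ' := g * τ with hσ'def
      have hσ' : inB n σ' := (dswap_inB ha hb hba hbna).mul hτ
      have hfa : σ' a = a := by
        rw [hσ'def, Perm.mul_apply, ← hbdef, hgapp, if_neg hba, if_pos rfl]
      have hfna : σ' (-a) = -a := by
        rw [hσ'def, Perm.mul_apply, hτna, hgapp]
        rw [if_neg (by omega), if_neg (by omega), if_neg (by omega), if_pos rfl]
      have hnBA : negSet A = permOrbit τ (-b) := by
        rw [hA, ← permOrbit_eq_of_mem hbA, negSet_permOrbit hτ b]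
      by_cases hAA : negSet A = A
      · -- symmetric orbit, only singletons needed
        set D : Set (Set ℤ) := {A} with hD
        have huntouched : ∀ X ∈ orbitsOn n τ, X ∉ D → X ∈ orbitsOn n σ' := by
          rintro X hXmem hXD
          obtain ⟨x, hx, rfl⟩ := hXmem
          rw [hσ'def, ← permOrbit_mul_eq_of_fixes (σ := τ) (g := g) (x := x) ?_]
          · exact permOrbit_mem_orbitsOn _ hx
          · intro y hy
            have e1 : y ≠ a := by
              rintro rfl
              exact hXD (by rw [hD, Set.mem_singleton_iff, hA, permOrbit_eq_of_mem hy])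
            have e2 : y ≠ b := by
              rintro rfl
              refine hXD ?_
              rw [hD, Set.mem_singleton_iff, ← permOrbit_eq_of_mem hy]
              exact permOrbit_eq_of_mem hbA
            have e3 : y ≠ -a := by
              rintro rfl
              refine hXD ?_
              rw [hD, Set.mem_singleton_iff, ← hAA, hnA, permOrbit_eq_of_mem hy]
            have e4 : y ≠ -b := by
              rintro rfl
              refine hXD ?_
              rw [hD, Set.mem_singleton_iff, ← hAA, hnBA, permOrbit_eq_of_mem hy]
            rw [hgdef, hgapp]
            simp [e1, e2, e3, e4]
        have hk : (asymOrbits n τ ∩ D).ncard ≤ 0 := by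
          have : asymOrbits n τ ∩ D = ∅ := by
            ext X
            simp only [Set.mem_inter_iff, Set.mem_empty_iff_false, iff_false, not_and]
            rintro hXF hXD
            rw [hD, Set.mem_singleton_iff] at hXD
            exact hXF.2 (hXD ▸ hAA)
          rw [this]
          simp
        have hE : ({({a} : Set ℤ), ({-a} : Set ℤ)} : Set (Set ℤ)) ⊆ asymOrbits n σ' := by
          rintro X (rfl | rfl)
          · exact singleton_asym ha hfa
          · exact singleton_asym (neg_mem_signedSet ha) hfna
        have h3 : ∀ X ∈ ({({a} : Set ℤ), ({-a} : Set ℤ)} : Set (Set ℤ)),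
            X ∉ asymOrbits n τ \ D := by
          rintro X (rfl | rfl) ⟨hXF, hXD⟩
          · exact hXD (by rw [hD, Set.mem_singleton_iff, orbitsOn_eq_of_mem hXF.1 rfl])
          · refine hXD ?_
            rw [hD, Set.mem_singleton_iff, orbitsOn_eq_of_mem hXF.1 rfl, ← hnA, hAA]
        have hm : 2 ≤ ({({a} : Set ℤ), ({-a} : Set ℤ)} : Set (Set ℤ)).ncard := by
          rw [Set.ncard_pair (by
            intro h
            have : a ∈ ({-a} : Set ℤ) := h ▸ rfl
            have h2 : a = -a := this
            omega)]
        have := book (asymOrbits_finite hτ) (asymOrbits_finite hσ')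
          (diff_subset_asym huntouched) hE h3 hk hm
        omega
      · -- asymmetric orbit : four new asymmetric orbits
        have hnaA : -a ∉ A := fun h =>
          hAA (orbitsOn_eq_of_common hnAmem hAmem hnaNA h)
        have hnbA : -b ∉ A := fun h =>
          hAA (orbitsOn_eq_of_common hnAmem hAmem
            (by rw [hnBA]; exact mem_permOrbit_self τ (-b)) h)
        have hginv : g⁻¹ = g :=
          inv_eq_of_mul_eq_one_right (dswap_mul_self h0a h0b hba hbna)
        set D : Set (Set ℤ) := {A, negSet A} with hD
        have huntouched : ∀ X ∈ orbitsOn n τ, X ∉ D → X ∈ orbitsOn n σ' := by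
          rintro X hXmem hXD
          obtain ⟨x, hx, rfl⟩ := hXmem
          rw [hσ'def, ← permOrbit_mul_eq_of_fixes (σ := τ) (g := g) (x := x) ?_]
          · exact permOrbit_mem_orbitsOn _ hx
          · intro y hy
            have e1 : y ≠ a := by
              rintro rfl
              exact hXD (by rw [hD]; left; rw [hA, permOrbit_eq_of_mem hy])
            have e2 : y ≠ b := by
              rintro rfl
              refine hXD ?_
              rw [hD]; left
              rw [← permOrbit_eq_of_mem hy]
              exact permOrbit_eq_of_mem hbA
            have e3 : y ≠ -a := by
              rintro rfl
              refine hXD ?_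
              rw [hD]; right
              rw [Set.mem_singleton_iff, hnA, permOrbit_eq_of_mem hy]
            have e4 : y ≠ -b := by
              rintro rfl
              refine hXD ?_
              rw [hD]; right
              rw [Set.mem_singleton_iff, hnBA, permOrbit_eq_of_mem hy]
            rw [hgdef, hgapp]
            simp [e1, e2, e3, e4]
        set R : Set ℤ := {z | z ∈ A ∧ z ≠ a} with hR
        have hbR : b ∈ R := ⟨hbA, hba⟩
        set P := permOrbit σ' b with hP
        set P' := permOrbit σ' (-b) with hP'
        have hPneg : negSet P = P' := negSet_permOrbit hσ' b
        have hbP : b ∈ P := mem_permOrbit_self σ' b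
        have hnbP' : -b ∈ P' := mem_permOrbit_self σ' (-b)
        have hPsub : P ⊆ R := by
          rw [hP]
          apply invariant_subset _ _ hbR
          · intro y hy
            rw [hσ'def, Perm.mul_apply, hgapp]
            split_ifs with e1 e2 e3 e4
            · exact hbR
            · exact absurd (τ.injective (e2.trans hbdef)) hy.2
            · exact absurd (e3 ▸ apply_mem_permOrbit hy.1) hnaA
            · exact absurd (e4 ▸ apply_mem_permOrbit hy.1) hnbA
            · exact ⟨apply_mem_permOrbit hy.1, e1⟩
          · intro y hy
            rw [hσ'def, mul_inv_rev, Perm.mul_apply, hginv, hgapp]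
            split_ifs with e1 e2 e3 e4
            · exact absurd e1 hy.2
            · refine ⟨inv_apply_mem_permOrbit haA, fun h => hmove ?_⟩
              have := congrArg (fun z => τ z) h
              simpa using this.symm
            · exact absurd (e3 ▸ hy.1) hnaA
            · exact absurd (e4 ▸ hy.1) hnbA
            · refine ⟨inv_apply_mem_permOrbit hy.1, fun h => e2 ?_⟩
              have := congrArg (fun z => τ z) h
              simp only [Perm.coe_inv, Equiv.apply_symm_apply] at this
              rw [this, ← hbdef]
        have hP'sub : P' ⊆ negSet R := by
          intro z hz
          rw [← hPneg] at hz
          exact hPsub hz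
        have haR : a ∉ R := fun h => h.2 rfl
        have hnaR : -a ∉ R := fun h => hnaA h.1
        have hanR : a ∉ negSet R := fun h => hnaA (mem_negSet.1 h).1
        have hnanR : -a ∉ negSet R := fun h => by
          have : -(-a) ∈ R := mem_negSet.1 h
          rw [neg_neg] at this
          exact this.2 rfl
        have hPP' : P ≠ P' := by
          intro h
          have : -b ∈ P := h ▸ hnbP'
          exact hnbA (hPsub this).1
        have hPasym : negSet P ≠ P := fun h => hPP' (by rw [← hPneg, h])
        have hP'asym : negSet P' ≠ P' := by
          rw [← hPneg, negSet_negSet]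
          exact fun h => hPP' (h.trans hPneg)
        set E : Set (Set ℤ) := {({a} : Set ℤ), ({-a} : Set ℤ), P, P'} with hE
        have hEsub : E ⊆ asymOrbits n σ' := by
          rintro X (rfl | rfl | rfl | rfl)
          · exact singleton_asym ha hfa
          · exact singleton_asym (neg_mem_signedSet ha) hfna
          · exact ⟨permOrbit_mem_orbitsOn σ' hb, hPasym⟩
          · exact ⟨permOrbit_mem_orbitsOn σ' (neg_mem_signedSet hb), hP'asym⟩
        have h3 : ∀ X ∈ E, X ∉ asymOrbits n τ \ D := by
          rintro X (rfl | rfl | rfl | rfl) ⟨hXF, hXD⟩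
          · exact hXD (by rw [hD]; left; rw [orbitsOn_eq_of_mem hXF.1 rfl])
          · refine hXD ?_
            rw [hD]; right
            rw [Set.mem_singleton_iff, orbitsOn_eq_of_mem hXF.1 rfl, ← hnA]
          · refine hXD ?_
            rw [hD]; left
            rw [orbitsOn_eq_of_mem hXF.1 hbP]
            exact permOrbit_eq_of_mem hbA
          · refine hXD ?_
            rw [hD]; right
            rw [Set.mem_singleton_iff, orbitsOn_eq_of_mem hXF.1 hnbP', ← hnBA]
        have d1 : ({a} : Set ℤ) ≠ ({-a} : Set ℤ) := by
          intro h
          have : a ∈ ({-a} : Set ℤ) := h ▸ rfl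
          have h2 : a = -a := this
          omega
        have d2 : ({a} : Set ℤ) ≠ P := fun h => haR (hPsub (h ▸ rfl))
        have d3 : ({a} : Set ℤ) ≠ P' := fun h => hanR (hP'sub (h ▸ rfl))
        have d4 : ({-a} : Set ℤ) ≠ P := fun h => hnaR (hPsub (h ▸ rfl))
        have d5 : ({-a} : Set ℤ) ≠ P' := fun h => hnanR (hP'sub (h ▸ rfl))
        have hfin1 : ({P, P'} : Set (Set ℤ)).Finite := (Set.finite_singleton _).insert _
        have hfin2 : ({({-a} : Set ℤ), P, P'} : Set (Set ℤ)).Finite := hfin1.insert _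
        have hm : 4 ≤ E.ncard := by
          have hne1 : ({a} : Set ℤ) ∉ ({({-a} : Set ℤ), P, P'} : Set (Set ℤ)) := by
            rintro (h | h | h)
            · exact d1 h
            · exact d2 h
            · exact d3 h
          have hne2 : ({-a} : Set ℤ) ∉ ({P, P'} : Set (Set ℤ)) := by
            rintro (h | h)
            · exact d4 h
            · exact d5 h
          rw [hE, Set.ncard_insert_of_notMem hne1 hfin2,
            Set.ncard_insert_of_notMem hne2 hfin1, Set.ncard_pair hPP']
        have hk : (asymOrbits n τ ∩ D).ncard ≤ 2 :=
          ncard_le_two (A := A) (B := negSet A) Set.inter_subset_right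
        have := book (asymOrbits_finite hτ) (asymOrbits_finite hσ')
          (diff_subset_asym huntouched) hEsub h3 hk hm
        omega


/-! ### assembly -/

lemma lower_list {n : ℕ} (l : List (Equiv.Perm ℤ)) (hl : ∀ g ∈ l, g ∈ genB n) :
    n ≤ (asymOrbits n l.prod).ncard / 2 + l.length := by
  induction l with
  | nil =>
      simp only [List.prod_nil, List.length_nil, add_zero]
      have : (asymOrbits n (1 : Perm ℤ)).ncard = 2 * n := asymOrbits_one_ncard n
      omega
  | cons g t ih =>
      have hg : g ∈ genB n := hl g (by simp)
      have ht : ∀ x ∈ t, x ∈ genB n := fun x hx => hl x (by simp [hx])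
      have hσ : inB n t.prod := inB_list_prod ht
      have hstep := step_gen hσ hg
      have := ih ht
      rw [List.prod_cons, List.length_cons]
      have h2 : (asymOrbits n t.prod).ncard / 2 ≤
          ((asymOrbits n (g * t.prod)).ncard + 2) / 2 := Nat.div_le_div_right hstep
      omega

lemma upper_list {n : ℕ} (τ : Equiv.Perm ℤ) (hτ : inB n τ) :
    ∃ l : List (Equiv.Perm ℤ), (∀ g ∈ l, g ∈ genB n) ∧ l.prod = τ ∧
      (asymOrbits n τ).ncard / 2 + l.length = n := by
  generalize hk : {x | τ x ≠ x}.ncard = k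
  induction k using Nat.strong_induction_on generalizing τ with
  | _ k IH =>
    by_cases hτ1 : τ = 1
    · refine ⟨[], by simp, by simp [hτ1], ?_⟩
      subst hτ1
      have : (asymOrbits n (1 : Perm ℤ)).ncard = 2 * n := asymOrbits_one_ncard n
      simp only [List.length_nil]
      omega
    · have hmoved : ∃ a, τ a ≠ a := by
        by_contra hc
        push_neg at hc
        exact hτ1 (Equiv.ext hc)
      obtain ⟨a, hmove⟩ := hmoved
      obtain ⟨g, hg, hgg, hfa, hfna, hsupp, hcount⟩ := contract hτ hmove
      set σ' := g * τ with hσ'def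
      have hσ' : inB n σ' := (genB_inB hg).mul hτ
      have hsub : {x | σ' x ≠ x} ⊂ {x | τ x ≠ x} := by
        constructor
        · exact fun x hx => hsupp x hx
        · intro hcon
          have : σ' a ≠ a := hcon hmove
          exact this hfa
      have hfinτ : {x | τ x ≠ x}.Finite :=
        (signedSet_finite n).subset (fun x hx => hτ.mem_of_moved hx)
      have hlt : {x | σ' x ≠ x}.ncard < k := by
        rw [← hk]
        exact Set.ncard_lt_ncard hsub hfinτ
      obtain ⟨l, hl, hprod, hlen⟩ := IH _ hlt σ' hσ' rfl
      have hback := step_gen hσ' hg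
      rw [hgg] at hback
      have heq : (asymOrbits n σ').ncard = (asymOrbits n τ).ncard + 2 :=
        le_antisymm hback hcount
      refine ⟨g :: l, ?_, ?_, ?_⟩
      · intro x hx
        rcases List.mem_cons.1 hx with rfl | hx
        · exact hg
        · exact hl x hx
      · rw [List.prod_cons, hprod, hgg]
      · rw [List.length_cons]
        omega


/-- For every `τ ∈ B_n`, the length `ℓ_B(τ)` equals
`n - (1/2)·#{orbits A of τ with A ≠ -A}`. -/
theorem lenB_eq (n : ℕ) (τ : Equiv.Perm ℤ) (hτ : inB n τ) :
    lenB n τ = n - {A | A ∈ orbitsOn n τ ∧ negSet A ≠ A}.ncard / 2 := by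
  have hN : {A | A ∈ orbitsOn n τ ∧ negSet A ≠ A} = asymOrbits n τ := rfl
  rw [hN]
  obtain ⟨l, hl, hprod, hlen⟩ := upper_list τ hτ
  have hmem : l.length ∈ {k : ℕ | ∃ l' : List (Equiv.Perm ℤ),
      l'.length = k ∧ (∀ g ∈ l', g ∈ genB n) ∧ l'.prod = τ} := ⟨l, rfl, hl, hprod⟩
  apply le_antisymm
  · calc lenB n τ ≤ l.length := Nat.sInf_le hmem
      _ = n - (asymOrbits n τ).ncard / 2 := by omega
  · refine le_csInf ⟨l.length, hmem⟩ ?_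
    rintro k ⟨l', hk, hl', hprod'⟩
    have := lower_list l' hl'
    rw [hprod'] at this
    omega
end

section
/- For all positive integers p and q, the binomial identity Σ_{c=1}^{min{p,q}} 2c · C(2p, p-c) · C(2q, q-c) = (pq/(p+q)) · C(2p, p) · C(2q, q) holds. -/
/-- Auxiliary: `C(2p, p-c)` over `ℚ`, with the convention that it vanishes for `c > p`. -/
noncomputable def auxCfun (p : ℕ) : ℕ → ℚ :=
  fun c => if c ≤ p then (Nat.choose (2 * p) (p - c) : ℚ) else 0

lemma auxCfun_step (p c : ℕ) :
    ((p : ℚ) + c + 1) * auxCfun p (c + 1) = ((p : ℚ) - c) * auxCfun p c := by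
  unfold auxCfun
  rcases lt_trichotomy c p with h | h | h
  · have hc1 : c + 1 ≤ p := by omega
    rw [if_pos hc1, if_pos h.le]
    have key : Nat.choose (2 * p) (p - c) * (p - c)
        = Nat.choose (2 * p) (p - (c + 1)) * (p + c + 1) := by
      have h1 : p - c = (p - (c + 1)) + 1 := by omega
      have h2 : 2 * p - (p - (c + 1)) = p + c + 1 := by omega
      rw [h1, Nat.choose_succ_right_eq, h2]
    have kq : (Nat.choose (2 * p) (p - c) : ℚ) * ((p : ℚ) - c)
        = (Nat.choose (2 * p) (p - (c + 1)) : ℚ) * ((p : ℚ) + c + 1) := by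
      have h1 : ((p : ℚ) - c) = ((p - c : ℕ) : ℚ) := by
        rw [Nat.cast_sub h.le]
      rw [h1]; exact_mod_cast key
    linear_combination -kq
  · subst h
    rw [if_neg (by omega), if_pos le_rfl]
    ring
  · rw [if_neg (by omega), if_neg (by omega)]
    ring

lemma aux_step (p q c : ℕ) :
    2 * ((p : ℚ) + q) * c * auxCfun p c * auxCfun q c
      = ((p : ℚ) + c) * ((q : ℚ) + c) * auxCfun p c * auxCfun q c
        - ((p : ℚ) + (c + 1)) * ((q : ℚ) + (c + 1)) * auxCfun p (c + 1) * auxCfun q (c + 1) := by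
  have h1 := auxCfun_step p c
  have h2 := auxCfun_step q c
  push_cast at h1 h2 ⊢
  linear_combination (((q : ℚ) + c + 1) * auxCfun q (c + 1)) * h1
    + (((p : ℚ) - c) * auxCfun p c) * h2

/-- For all positive integers `p`, `q`:
`Σ_{c=1}^{min{p,q}} 2c·C(2p,p-c)·C(2q,q-c) = (pq/(p+q))·C(2p,p)·C(2q,q)`. -/
theorem binomial_identity_dixon (p q : ℕ) (hp : 1 ≤ p) (hq : 1 ≤ q) :
    ((∑ c ∈ Finset.Icc 1 (min p q),
        2 * c * Nat.choose (2 * p) (p - c) * Nat.choose (2 * q) (q - c) : ℕ) : ℚ) =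
      ((p : ℚ) * q / ((p : ℚ) + q)) * (Nat.choose (2 * p) p : ℚ) *
        (Nat.choose (2 * q) q : ℚ) := by
  have hpq : ((p : ℚ) + q) ≠ 0 := by positivity
  set m := min p q with hm
  set F : ℕ → ℚ := fun c =>
    ((p : ℚ) + c) * ((q : ℚ) + c) * auxCfun p c * auxCfun q c with hF
  have hsum : ((∑ c ∈ Finset.Icc 1 m,
      2 * c * Nat.choose (2 * p) (p - c) * Nat.choose (2 * q) (q - c) : ℕ) : ℚ)
      = ∑ c ∈ Finset.Icc 1 m, 2 * ((p : ℚ) + q) * c * auxCfun p c * auxCfun q c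
          / ((p : ℚ) + q) := by
    push_cast
    refine Finset.sum_congr rfl fun c hc => ?_
    simp only [Finset.mem_Icc] at hc
    have hcp : c ≤ p := le_trans hc.2 (min_le_left p q)
    have hcq : c ≤ q := le_trans hc.2 (min_le_right p q)
    rw [auxCfun, auxCfun, if_pos hcp, if_pos hcq]
    field_simp
  have htel : ∀ n : ℕ, ∑ c ∈ Finset.Icc 1 n, (F c - F (c + 1)) = F 1 - F (n + 1) := by
    intro n
    induction n with
    | zero => simp
    | succ k ih =>
        rw [Finset.sum_Icc_succ_top (by omega), ih]
        ring
  have hstep : ∑ c ∈ Finset.Icc 1 m, 2 * ((p : ℚ) + q) * c * auxCfun p c * auxCfun q c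
      = F 1 - F (m + 1) := by
    rw [← htel m]
    refine Finset.sum_congr rfl fun c _ => ?_
    simpa [hF] using aux_step p q c
  have hFm : F (m + 1) = 0 := by
    rcases le_total p q with h | h
    · have : m = p := min_eq_left h
      simp [hF, this, auxCfun]
    · have : m = q := min_eq_right h
      simp [hF, this, auxCfun]
  have hF1 : F 1 = (p : ℚ) * q * (Nat.choose (2 * p) p : ℚ) * (Nat.choose (2 * q) q : ℚ) := by
    have e1 := auxCfun_step p 0
    have e2 := auxCfun_step q 0
    simp only [Nat.cast_zero, add_zero, sub_zero, zero_add] at e1 e2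
    have c0p : auxCfun p 0 = (Nat.choose (2 * p) p : ℚ) := by simp [auxCfun]
    have c0q : auxCfun q 0 = (Nat.choose (2 * q) q : ℚ) := by simp [auxCfun]
    rw [c0p] at e1; rw [c0q] at e2
    simp only [hF, Nat.cast_one]
    push_cast at e1 e2 ⊢
    linear_combination ((q : ℚ) + 1) * auxCfun q 1 * e1 + (p : ℚ) * (Nat.choose (2*p) p : ℚ) * e2
  rw [hsum, ← Finset.sum_div, hstep, hFm, hF1]
  field_simp
  ring
end
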